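/- Let A be a nonempty finite type and let K be a complex matrix indexed by (A × A) × (A × A). Then the following are equivalent: (i) for every positive semidefinite complex matrix ρ indexed by A, Tr( ((ρ ⊗ₖ 1) ★ S) · K ) = 0; (ii) Tr_B( S ★ K ) = 0 (the zero A-indexed matrix). -/

import Mathlib

open Matrix
open scoped Kronecker ComplexOrder

noncomputable def jordan {n : Type*} [Fintype n] (X Y : Matrix n n ℂ) : Matrix n n ℂ :=
  (2 : ℂ)⁻¹ • (X * Y + Y * X)

noncomputable def trB {A B : Type*} [Fintype B] (M : Matrix (A × B) (A × B) ℂ) : Matrix A A ℂ :=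
  Matrix.of fun i j => ∑ k, M (i, k) (j, k)

noncomputable def trA {A B : Type*} [Fintype A] (M : Matrix (A × B) (A × B) ℂ) : Matrix B B ℂ :=
  Matrix.of fun k l => ∑ i, M (i, k) (i, l)

def ptA {A B : Type*} (M : Matrix (A × B) (A × B) ℂ) : Matrix (A × B) (A × B) ℂ :=
  Matrix.of fun p q => M (q.1, p.2) (p.1, q.2)

def swap (A : Type*) [DecidableEq A] : Matrix (A × A) (A × A) ℂ :=
  Matrix.of fun p q => if p.1 = q.2 ∧ p.2 = q.1 then 1 else 0

def IsState {A : Type*} [Fintype A] (ρ : Matrix A A ℂ) : Prop :=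
  ρ.PosSemidef ∧ ρ.trace = 1

def IsJam {A B : Type*} [Fintype A] [Fintype B] [DecidableEq A]
    (J : Matrix (A × B) (A × B) ℂ) : Prop :=
  (ptA J).PosSemidef ∧ trB J = 1

noncomputable def cost {A B : Type*} [Fintype A] [Fintype B] [DecidableEq A] [DecidableEq B]
    (K : Matrix (A × B) (A × B) ℂ) (ρ : Matrix A A ℂ) (σ : Matrix B B ℂ) : ℝ :=
  sInf { r : ℝ | ∃ J : Matrix (A × B) (A × B) ℂ, IsJam J ∧
      trA ((ρ ⊗ₖ (1 : Matrix B B ℂ)) * J) = σ ∧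
      r = (Matrix.trace (K * jordan (ρ ⊗ₖ (1 : Matrix B B ℂ)) J)).re }

lemma trace_jordan_left {n : Type*} [Fintype n] (X S K : Matrix n n ℂ) :
    Matrix.trace (jordan X S * K) = Matrix.trace (X * jordan S K) := by
  simp only [jordan, Matrix.smul_mul, Matrix.mul_smul, Matrix.add_mul, Matrix.mul_add,
    Matrix.trace_smul, Matrix.trace_add]
  rw [← Matrix.mul_assoc X S K, ← Matrix.mul_assoc X K S,
    Matrix.trace_mul_cycle S X K, Matrix.trace_mul_cycle K S X]

lemma trace_kron_one {A : Type*} [Fintype A] [DecidableEq A]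
    (ρ : Matrix A A ℂ) (N : Matrix (A × A) (A × A) ℂ) :
    Matrix.trace ((ρ ⊗ₖ (1 : Matrix A A ℂ)) * N) = Matrix.trace (ρ * trB N) := by
  simp only [Matrix.trace, Matrix.diag, Matrix.mul_apply, trB, Matrix.of_apply,
    Matrix.kroneckerMap_apply, Matrix.one_apply, Fintype.sum_prod_type, mul_ite, mul_one,
    mul_zero, ite_mul, zero_mul, Finset.sum_ite_eq, Finset.mem_univ, if_true,
    Finset.mul_sum]
  apply Finset.sum_congr rfl; intro i _
  rw [Finset.sum_comm]

lemma eq_zero_of_trace_psd {A : Type*} [Fintype A] [DecidableEq A]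
    (M : Matrix A A ℂ) (h : ∀ ρ : Matrix A A ℂ, ρ.PosSemidef → Matrix.trace (ρ * M) = 0) :
    M = 0 := by
  have h2 : ∀ v : A → ℂ, (Matrix.vecMulVec v (star v)).PosSemidef := by
    intro v
    rw [Matrix.posSemidef_iff_dotProduct_mulVec]
    constructor
    · ext i j
      simp [Matrix.conjTranspose_apply, Matrix.vecMulVec_apply, mul_comm]
    · intro x
      have : star x ⬝ᵥ (Matrix.vecMulVec v (star v) *ᵥ x)
          = star (star v ⬝ᵥ x) * (star v ⬝ᵥ x) := by
        simp only [dotProduct, Matrix.mulVec, Matrix.vecMulVec_apply, Pi.star_apply,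
          star_sum, star_mul', star_star, Finset.mul_sum, Finset.sum_mul]
        rw [Finset.sum_comm]
        apply Finset.sum_congr rfl; intro i _
        apply Finset.sum_congr rfl; intro j _
        ring
      rw [this]
      exact star_mul_self_nonneg _
  have key : Matrix.toEuclideanLin Mᴴ = 0 := by
    rw [← inner_map_self_eq_zero]
    intro x
    have hx := h _ (h2 x)
    simp only [Matrix.trace, Matrix.diag, Matrix.mul_apply, Matrix.vecMulVec_apply,
      Pi.star_apply] at hx
    simp only [Matrix.toEuclideanLin_apply, PiLp.inner_apply,
      Matrix.mulVec, dotProduct, Matrix.conjTranspose_apply, RCLike.inner_apply,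
      star_sum, star_mul', star_star]
    rw [← hx]
    refine Finset.sum_congr rfl fun i _ => ?_
    rw [map_sum, Finset.mul_sum]
    refine Finset.sum_congr rfl fun j _ => ?_
    simp only [_root_.map_mul, RCLike.star_def, Complex.conj_conj]
    ring
  have : Mᴴ = 0 := by
    have := congrArg Matrix.toEuclideanLin.symm key
    simpa using this
  calc M = Mᴴᴴ := by rw [Matrix.conjTranspose_conjTranspose]
    _ = 0 := by rw [this]; simp


theorem stmt2 {A : Type*} [Fintype A] [Nonempty A] [DecidableEq A]
    (K : Matrix (A × A) (A × A) ℂ) :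
    (∀ ρ : Matrix A A ℂ, ρ.PosSemidef →
        Matrix.trace (jordan (ρ ⊗ₖ (1 : Matrix A A ℂ)) (swap A) * K) = 0) ↔
    trB (jordan (swap A) K) = 0 := by
  constructor
  · intro h
    apply eq_zero_of_trace_psd
    intro ρ hρ
    rw [← trace_kron_one, ← trace_jordan_left]
    exact h ρ hρ
  · intro h ρ hρ
    rw [trace_jordan_left, trace_kron_one, h]
    simp
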